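/- arXiv:1912.01995 — 3 statements merged into one kernel-verified Lean document; each statement's English description precedes it below -/
import Mathlib

section
/- The function g(S) = log₂(∑_{i=1}^N pᵢβ/(H² + Sᵢ) + σ²), where pᵢ, β, H, σ² > 0 and Sᵢ ≥ 0, is convex and nonincreasing in each coordinate Sᵢ on the nonnegative orthant. -/
open Real Finset

/-- Hölder: sum of geometric means is at most the geometric mean of sums. -/
lemma holder_geom {n : ℕ} (u v : Fin n → ℝ) (hu : ∀ i, 0 ≤ u i) (hv : ∀ i, 0 ≤ v i)
    {a b : ℝ} (ha : 0 < a) (hb : 0 < b) (hab : a + b = 1) :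
    ∑ i, (u i) ^ a * (v i) ^ b ≤ (∑ i, u i) ^ a * (∑ i, v i) ^ b := by
  have hpq : Real.HolderConjugate a⁻¹ b⁻¹ := Real.HolderConjugate.inv_inv ha hb hab
  have h := Real.inner_le_Lp_mul_Lq_of_nonneg (s := Finset.univ)
      (f := fun i => (u i) ^ a) (g := fun i => (v i) ^ b) hpq
      (fun i _ => Real.rpow_nonneg (hu i) a) (fun i _ => Real.rpow_nonneg (hv i) b)
  have e1 : ∀ i, ((u i) ^ a) ^ (a⁻¹ : ℝ) = u i := fun i => by
    rw [← Real.rpow_mul (hu i), mul_inv_cancel₀ ha.ne', Real.rpow_one]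
  have e2 : ∀ i, ((v i) ^ b) ^ (b⁻¹ : ℝ) = v i := fun i => by
    rw [← Real.rpow_mul (hv i), mul_inv_cancel₀ hb.ne', Real.rpow_one]
  simpa [e1, e2, one_div, inv_inv] using h

/-- log₂ of a geometric mean splits. -/
lemma logb_geom {x y a b : ℝ} (hx : 0 < x) (hy : 0 < y) :
    Real.logb 2 (x ^ a * y ^ b) = a * Real.logb 2 x + b * Real.logb 2 y := by
  rw [Real.logb_mul (Real.rpow_pos_of_pos hx a).ne' (Real.rpow_pos_of_pos hy b).ne']
  simp [Real.logb, Real.log_rpow hx, Real.log_rpow hy, mul_div_assoc, add_div]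


/-- `g S = log₂(∑ pᵢ β/(H² + Sᵢ) + σ²)` is jointly convex and nonincreasing in each
coordinate on the nonnegative orthant. -/
theorem stmt_5 (N : ℕ) (p : Fin N → ℝ) (β H σ2 : ℝ)
    (hp : ∀ i, 0 < p i) (hβ : 0 < β) (hH : 0 < H) (hσ : 0 < σ2) :
    ConvexOn ℝ {S : Fin N → ℝ | ∀ i, 0 ≤ S i}
      (fun S => Real.logb 2 (∑ i, p i * β / (H ^ 2 + S i) + σ2)) ∧
    (∀ S T : Fin N → ℝ, (∀ i, 0 ≤ S i) → (∀ i, 0 ≤ T i) → (∀ i, S i ≤ T i) →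
      Real.logb 2 (∑ i, p i * β / (H ^ 2 + T i) + σ2) ≤
        Real.logb 2 (∑ i, p i * β / (H ^ 2 + S i) + σ2)) := by

  have hden : ∀ (S : Fin N → ℝ), (∀ i, 0 ≤ S i) → ∀ i, 0 < H ^ 2 + S i := fun S hS i =>
    add_pos_of_pos_of_nonneg (pow_pos hH 2) (hS i)
  have hterm : ∀ (S : Fin N → ℝ), (∀ i, 0 ≤ S i) → ∀ i, 0 < p i * β / (H ^ 2 + S i) :=
    fun S hS i => div_pos (mul_pos (hp i) hβ) (hden S hS i)
  have hpos : ∀ (S : Fin N → ℝ), (∀ i, 0 ≤ S i) → 0 < ∑ i, p i * β / (H ^ 2 + S i) + σ2 :=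
    fun S hS => add_pos_of_nonneg_of_pos
      (Finset.sum_nonneg fun i _ => (hterm S hS i).le) hσ
  constructor
  · constructor
    · -- convexity of the set
      intro x hx y hy a b ha hb hab i
      simp only [Pi.add_apply, Pi.smul_apply, smul_eq_mul]
      exact add_nonneg (mul_nonneg ha (hx i)) (mul_nonneg hb (hy i))
    · intro x hx y hy a b ha hb hab
      rcases ha.eq_or_lt with rfl | ha'
      · simp_all
      rcases hb.eq_or_lt with rfl | hb'
      · simp_all
      set u : Fin N → ℝ := fun i => p i * β / (H ^ 2 + x i) with hu
      set v : Fin N → ℝ := fun i => p i * β / (H ^ 2 + y i) with hv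
      -- pointwise log-convexity of each term
      have step1 : ∀ i, p i * β / (H ^ 2 + (a • x + b • y) i) ≤ (u i) ^ a * (v i) ^ b := by
        intro i
        have hxi := hden x hx i
        have hyi := hden y hy i
        have hgeom : (H ^ 2 + x i) ^ a * (H ^ 2 + y i) ^ b
            ≤ H ^ 2 + (a • x + b • y) i := by
          have := Real.geom_mean_le_arith_mean2_weighted ha hb hxi.le hyi.le hab
          simp only [Pi.add_apply, Pi.smul_apply, smul_eq_mul]
          nlinarith [this]
        have hgpos : 0 < (H ^ 2 + x i) ^ a * (H ^ 2 + y i) ^ b :=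
          mul_pos (Real.rpow_pos_of_pos hxi a) (Real.rpow_pos_of_pos hyi b)
        have h1 : p i * β / (H ^ 2 + (a • x + b • y) i)
            ≤ p i * β / ((H ^ 2 + x i) ^ a * (H ^ 2 + y i) ^ b) := by
          apply div_le_div_of_nonneg_left (mul_pos (hp i) hβ).le hgpos hgeom
        refine h1.trans_eq ?_
        have hpb : (0:ℝ) < p i * β := mul_pos (hp i) hβ
        rw [hu, hv]
        simp only
        rw [Real.div_rpow hpb.le hxi.le, Real.div_rpow hpb.le hyi.le,
          div_mul_div_comm, ← Real.rpow_add hpb, hab, Real.rpow_one]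
      -- sum them and apply Hölder (including σ² as an extra coordinate)
      have step2 : ∑ i, p i * β / (H ^ 2 + (a • x + b • y) i) + σ2
          ≤ (∑ i, u i + σ2) ^ a * (∑ i, v i + σ2) ^ b := by
        have hσab : σ2 = σ2 ^ a * σ2 ^ b := by
          rw [← Real.rpow_add hσ, hab, Real.rpow_one]
        have h2 : ∑ i, p i * β / (H ^ 2 + (a • x + b • y) i) + σ2
            ≤ ∑ i, (u i) ^ a * (v i) ^ b + σ2 := by
          gcongr with i
          exact step1 i
        have h2' : ∑ i : Fin (N + 1), (Fin.cons σ2 u i) ^ a * (Fin.cons σ2 v i) ^ b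
            = ∑ i, (u i) ^ a * (v i) ^ b + σ2 := by
          rw [Fin.sum_univ_succ]
          simp only [Fin.cons_zero, Fin.cons_succ, ← hσab]
          ring
        refine h2.trans (h2'.symm.le.trans ?_)
        have h3 := holder_geom (Fin.cons σ2 u) (Fin.cons σ2 v)
          (fun i => by
            refine Fin.cases ?_ ?_ i
            · simpa using hσ.le
            · intro j; simpa using (hterm x hx j).le)
          (fun i => by
            refine Fin.cases ?_ ?_ i
            · simpa using hσ.le
            · intro j; simpa using (hterm y hy j).le)
          ha' hb' hab
        simpa [Fin.sum_cons, add_comm] using h3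
      -- take logs
      calc Real.logb 2 (∑ i, p i * β / (H ^ 2 + (a • x + b • y) i) + σ2)
          ≤ Real.logb 2 ((∑ i, u i + σ2) ^ a * (∑ i, v i + σ2) ^ b) := by
            exact Real.logb_le_logb_of_le one_lt_two (hpos _ fun i =>
              add_nonneg (mul_nonneg ha (hx i)) (mul_nonneg hb (hy i))) step2
        _ = a * Real.logb 2 (∑ i, u i + σ2) + b * Real.logb 2 (∑ i, v i + σ2) :=
            logb_geom (hpos x hx) (hpos y hy)
        _ = a • Real.logb 2 (∑ i, u i + σ2) + b • Real.logb 2 (∑ i, v i + σ2) := by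
            simp [smul_eq_mul]
  · intro S T hS hT hST
    refine Real.logb_le_logb_of_le one_lt_two (hpos T hT) ?_
    gcongr with i
    · exact (mul_pos (hp i) hβ).le
    · exact hden S hS i
    · exact hST i
end

section
/- For positive constants pᵢ, β, H and nonnegative reals dᵢ, dᵢ⁰, the inequality log₂(∑ᵢ pᵢβ/(H² + dᵢ)) ≥ log₂(∑ᵢ pᵢβ/(H² + dᵢ⁰)) − ∑ᵢ [pᵢβ/(H² + dᵢ⁰)² · log₂ e / (∑ⱼ pⱼβ/(H² + dⱼ⁰))] · (dᵢ − dᵢ⁰) holds; i.e., the first-order Taylor expansion of the convex function d ↦ log₂(∑ᵢ pᵢβ/(H² + dᵢ)) at d⁰ is a global under-estimator. -/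
open Real

/-- First-order Taylor under-estimator of the convex function
`d ↦ log₂(∑ pᵢβ/(H² + dᵢ))` at `d⁰`. -/
theorem stmt_6 (N : ℕ) (p : Fin N → ℝ) (β H : ℝ)
    (hp : ∀ i, 0 < p i) (hβ : 0 < β) (hH : 0 < H)
    (d d0 : Fin N → ℝ) (hd : ∀ i, 0 ≤ d i) (hd0 : ∀ i, 0 ≤ d0 i) :
    Real.logb 2 (∑ i, p i * β / (H ^ 2 + d0 i)) -
      ∑ i, (p i * β / (H ^ 2 + d0 i) ^ 2 * Real.logb 2 (Real.exp 1) /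
        (∑ j, p j * β / (H ^ 2 + d0 j))) * (d i - d0 i) ≤
    Real.logb 2 (∑ i, p i * β / (H ^ 2 + d i)) := by
  rcases Nat.eq_zero_or_pos N with hN | hN
  · subst hN; simp
  have hne : (Finset.univ : Finset (Fin N)).Nonempty := by
    simp [Finset.univ_nonempty_iff]
    exact Fin.pos_iff_nonempty.mp hN
  have hHd : ∀ i, 0 < H ^ 2 + d i := fun i =>
    add_pos_of_pos_of_nonneg (by positivity) (hd i)
  have hHd0 : ∀ i, 0 < H ^ 2 + d0 i := fun i =>
    add_pos_of_pos_of_nonneg (by positivity) (hd0 i)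
  set S : ℝ := ∑ i, p i * β / (H ^ 2 + d i) with hS
  set S0 : ℝ := ∑ i, p i * β / (H ^ 2 + d0 i) with hS0
  set C : ℝ := ∑ i, p i * β * (H ^ 2 + d i) / (H ^ 2 + d0 i) ^ 2 with hC
  have hSpos : 0 < S := Finset.sum_pos (fun i _ => by
    have := hp i; have := hHd i; positivity) hne
  have hS0pos : 0 < S0 := Finset.sum_pos (fun i _ => by
    have := hp i; have := hHd0 i; positivity) hne
  have hCpos : 0 < C := Finset.sum_pos (fun i _ => by
    have := hp i; have := hHd i; have := hHd0 i; positivity) hne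
  -- Cauchy-Schwarz: S0^2 ≤ S * C
  have hcs : S0 ^ 2 ≤ S * C := by
    refine Finset.sum_sq_le_sum_mul_sum_of_sq_eq_mul Finset.univ
      (f := fun i => p i * β / (H ^ 2 + d i))
      (g := fun i => p i * β * (H ^ 2 + d i) / (H ^ 2 + d0 i) ^ 2)
      (fun i _ => by have := hp i; have := hHd i; positivity)
      (fun i _ => by have := hp i; have := hHd i; have := hHd0 i; positivity)
      (fun i _ => ?_)
    have h1 := (hHd i).ne'
    have h2 := (hHd0 i).ne'
    field_simp
  -- key scalar inequality: log S0 - log S ≤ C / S0 - 1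
  have hkey : Real.log S0 - Real.log S ≤ C / S0 - 1 := by
    have h1 : Real.log S0 - Real.log S = Real.log (S0 / S) := by
      rw [Real.log_div hS0pos.ne' hSpos.ne']
    have h2 : Real.log (S0 / S) ≤ S0 / S - 1 :=
      Real.log_le_sub_one_of_pos (by positivity)
    have h3 : S0 / S ≤ C / S0 := by
      rw [div_le_div_iff₀ hSpos hS0pos]
      nlinarith [hcs]
    linarith [h1 ▸ h2]
  -- rewrite the gradient sum
  have hsum : ∑ i, (p i * β / (H ^ 2 + d0 i) ^ 2 * Real.logb 2 (Real.exp 1) / S0) *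
      (d i - d0 i) = (C - S0) * Real.logb 2 (Real.exp 1) / S0 := by
    rw [hC, hS0, ← Finset.sum_sub_distrib, Finset.sum_mul, Finset.sum_div]
    refine Finset.sum_congr rfl fun i _ => ?_
    have h1 := (hHd0 i).ne'
    have hS0ne := hS0pos.ne'
    rw [hS0] at hS0ne
    field_simp
    ring
  rw [hsum]
  have hlogb : ∀ x : ℝ, Real.logb 2 x = Real.log x / Real.log 2 := fun x => rfl
  have hlog2 : (0:ℝ) < Real.log 2 := Real.log_pos one_lt_two
  have he : Real.logb 2 (Real.exp 1) = 1 / Real.log 2 := by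
    rw [hlogb, Real.log_exp]
  rw [he, hlogb, hlogb]
  have heq : (C - S0) * (1 / Real.log 2) / S0 = (C / S0 - 1) / Real.log 2 := by
    field_simp
  rw [heq, div_sub_div_same]
  gcongr
  linarith
end

section
/- (Dinkelbach characterization) Let F be a nonempty compact set, N : F → ℝ continuous, D : F → ℝ continuous with D(x) > 0 for all x ∈ F, and let ζ* = max_{x ∈ F} N(x)/D(x). Then a point x* ∈ F attains ζ* = N(x*)/D(x*) if and only if x* maximizes N(x) − ζ*·D(x) over F and the maximum value max_{x ∈ F} (N(x) − ζ*·D(x)) equals 0. -/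
/-- Dinkelbach characterization: `x* ∈ F` attains the maximum ratio `ζ* = N/D`
iff it maximizes `N − ζ*·D` over `F` with maximum value `0`. -/
theorem stmt_9 {X : Type*} [TopologicalSpace X] (F : Set X)
    (hFne : F.Nonempty) (hFc : IsCompact F)
    (Nf Df : X → ℝ) (hN : ContinuousOn Nf F) (hD : ContinuousOn Df F)
    (hDpos : ∀ x ∈ F, 0 < Df x)
    (ζstar : ℝ) (hζ : IsGreatest ((fun x => Nf x / Df x) '' F) ζstar)
    (xstar : X) (hx : xstar ∈ F) :
    Nf xstar / Df xstar = ζstar ↔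
      ((∀ x ∈ F, Nf x - ζstar * Df x ≤ Nf xstar - ζstar * Df xstar) ∧
        Nf xstar - ζstar * Df xstar = 0) := by
  have key : ∀ x ∈ F, Nf x - ζstar * Df x ≤ 0 := by
    intro x hxF
    have hle : Nf x / Df x ≤ ζstar := hζ.2 ⟨x, hxF, rfl⟩
    have hd := hDpos x hxF
    nlinarith [(div_le_iff₀ hd).mp hle]
  constructor
  · intro h
    have hd := hDpos xstar hx
    have h0 : Nf xstar - ζstar * Df xstar = 0 := by
      have := (div_eq_iff hd.ne').mp h
      linarith
    exact ⟨fun x hxF => h0 ▸ key x hxF, h0⟩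
  · rintro ⟨_, h0⟩
    have hd := hDpos xstar hx
    field_simp
    linarith
end
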